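/- arXiv:0901.1574 — 4 statements merged into one kernel-verified Lean document; each statement's English description precedes it below -/
import Mathlib

section
/- For all positive integers m and n, the Fuß-Catalan number (1/(mn+1)) * binomial((m+1)n, n) is a positive integer. -/
/-- The Fuß-Catalan number `Cat_n^(m) = (1/(mn+1)) * C((m+1)n, n)` is a positive integer:
`mn+1` divides the binomial coefficient, and the quotient is positive. -/
theorem fuss_catalan_pos_integer (m n : ℕ) (hm : 0 < m) (hn : 0 < n) :
    ∃ c : ℕ, 0 < c ∧ Nat.choose ((m + 1) * n) n = (m * n + 1) * c := by
  set N := (m + 1) * n with hN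
  have hNe : N = m * n + n := by rw [hN]; ring
  have hkey : N.choose n * n = N.choose (n - 1) * (m * n + 1) := by
    have := Nat.choose_succ_right_eq N (n - 1)
    rw [Nat.sub_add_cancel hn] at this
    rw [this]
    congr 1
    omega
  have hcop : (m * n + 1).Coprime n := by
    simpa using Nat.coprime_mul_left_add_left 1 n m
  have hdvd : (m * n + 1) ∣ N.choose n := by
    refine hcop.dvd_of_dvd_mul_right ?_
    exact ⟨N.choose (n - 1), by rw [hkey]; ring⟩
  obtain ⟨c, hc⟩ := hdvd
  refine ⟨c, ?_, hc⟩
  have hpos : 0 < N.choose n := Nat.choose_pos (by omega)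
  rw [hc] at hpos
  exact Nat.pos_of_ne_zero (by rintro rfl; simp at hpos)
end

section
/- For each positive integer m, the number of m-Dyck paths of semilength n equals the Fuß-Catalan number (1/(mn+1)) * binomial((m+1)n, n). -/
/-- An `m`-Dyck path of semilength `n`, encoded as a sequence `(a_1, …, a_n)` of non-negative
integers with `a_1 = 0` and `a_{i+1} ≤ a_i + m` (supported on `1, …, n`). -/
def IsMDyckPath (m n : ℕ) (a : ℕ → ℕ) : Prop :=
  a 1 = 0 ∧ (∀ i, 1 ≤ i → i < n → a (i + 1) ≤ a i + m) ∧ (∀ i, i = 0 ∨ n < i → a i = 0)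

namespace MDyckAux

/-- length of the augmented word: `mn + 1` up-steps and `n` down-steps. -/
def LL (m n : ℕ) : ℕ := (m + 1) * n + 1

/-- steps of the `LL`-periodic word determined by the set `S` of down-step positions. -/
def w (m n : ℕ) (S : Finset ℕ) (i : ℕ) : ℤ := if i % LL m n ∈ S then -(m : ℤ) else 1

/-- prefix sums of the word. -/
def p (m n : ℕ) (S : Finset ℕ) (t : ℕ) : ℤ := ∑ i ∈ Finset.range t, w m n S i

/-- the cyclic shift of the word starting at position `j` is "dominant". -/
def DomAt (m n : ℕ) (S : Finset ℕ) (j : ℕ) : Prop :=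
  ∀ k < LL m n, p m n S j + 1 ≤ p m n S (j + k + 1)

instance (m n : ℕ) (S : Finset ℕ) (j : ℕ) : Decidable (DomAt m n S j) := by
  unfold DomAt; infer_instance

/-- rotation of the word by `j`. -/
def rot (m n : ℕ) (j : ℕ) (S : Finset ℕ) : Finset ℕ :=
  (Finset.range (LL m n)).filter (fun x => (x + j) % LL m n ∈ S)

/-- all words -/
def P (m n : ℕ) : Finset (Finset ℕ) := Finset.powersetCard n (Finset.range (LL m n))

/-- dominant words -/
def D (m n : ℕ) : Finset (Finset ℕ) := (P m n).filter (fun S => DomAt m n S 0)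

lemma LL_pos (m n : ℕ) : 0 < LL m n := Nat.succ_pos _

lemma mem_P {m n : ℕ} {S : Finset ℕ} :
    S ∈ P m n ↔ S ⊆ Finset.range (LL m n) ∧ S.card = n := Finset.mem_powersetCard

lemma p_zero (m n : ℕ) (S : Finset ℕ) : p m n S 0 = 0 := by simp [p]

lemma p_succ (m n : ℕ) (S : Finset ℕ) (t : ℕ) : p m n S (t + 1) = p m n S t + w m n S t := by
  simp [p, Finset.sum_range_succ]

lemma card_filter_lt (S : Finset ℕ) (k : ℕ) :
    (S.filter (· < k + 1)).card =
      (S.filter (· < k)).card + (if k ∈ S then 1 else 0) := by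
  by_cases h : k ∈ S
  · simp only [h, if_pos]
    have : S.filter (· < k + 1) = insert k (S.filter (· < k)) := by
      ext x
      simp only [Finset.mem_filter, Finset.mem_insert]
      constructor
      · rintro ⟨hx, hlt⟩
        rcases Nat.lt_succ_iff_lt_or_eq.mp hlt with h' | h'
        · exact Or.inr ⟨hx, h'⟩
        · exact Or.inl h'
      · rintro (rfl | ⟨hx, hlt⟩)
        · exact ⟨h, Nat.lt_succ_self _⟩
        · exact ⟨hx, Nat.lt_succ_of_lt hlt⟩
    rw [this, Finset.card_insert_of_notMem (by simp)]
  · simp only [h, if_neg, Nat.add_zero, if_false]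
    congr 1
    ext x
    simp only [Finset.mem_filter]
    constructor
    · rintro ⟨hx, hlt⟩
      refine ⟨hx, ?_⟩
      rcases Nat.lt_succ_iff_lt_or_eq.mp hlt with h' | h'
      · exact h'
      · exact absurd (h' ▸ hx) h
    · rintro ⟨hx, hlt⟩
      exact ⟨hx, Nat.lt_succ_of_lt hlt⟩

lemma p_eq (m n : ℕ) (S : Finset ℕ) (hS : S ⊆ Finset.range (LL m n)) (k : ℕ)
    (hk : k ≤ LL m n) :
    p m n S k = (k : ℤ) - (m + 1) * ((S.filter (· < k)).card : ℤ) := by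
  induction k with
  | zero =>
    have : S.filter (· < 0) = ∅ := by
      ext x; simp
    simp [p, this]
  | succ k ih =>
    have hk' : k ≤ LL m n := Nat.le_of_succ_le hk
    have hklt : k < LL m n := hk
    rw [p_succ, ih hk', card_filter_lt]
    have hmod : k % LL m n = k := Nat.mod_eq_of_lt hklt
    by_cases h : k ∈ S
    · simp only [w, hmod, h, if_pos]
      push_cast
      ring
    · simp only [w, hmod, h, if_neg, if_false]
      push_cast
      ring
lemma p_LL (m n : ℕ) (S : Finset ℕ) (hS : S ⊆ Finset.range (LL m n)) (hc : S.card = n) :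
    p m n S (LL m n) = 1 := by
  rw [p_eq m n S hS _ le_rfl]
  have : S.filter (· < LL m n) = S := by
    apply Finset.filter_true_of_mem
    intro x hx
    exact Finset.mem_range.mp (hS hx)
  rw [this, hc]
  show ((m+1)*n + 1 : ℕ) - (m+1) * (n:ℤ) = 1
  push_cast
  ring

lemma p_add_LL (m n : ℕ) (S : Finset ℕ) (hS : S ⊆ Finset.range (LL m n)) (hc : S.card = n)
    (t : ℕ) : p m n S (t + LL m n) = p m n S t + 1 := by
  induction t with
  | zero => simpa [p] using p_LL m n S hS hc
  | succ t ih =>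
    have hw : w m n S (t + LL m n) = w m n S t := by
      simp [w, Nat.add_mod_right]
    have : t + 1 + LL m n = (t + LL m n) + 1 := by omega
    rw [this, p_succ, hw, ih, p_succ]
    ring
lemma exists_unique_domAt (m n : ℕ) (S : Finset ℕ) (hS : S ⊆ Finset.range (LL m n)) (hc : S.card = n) :
    ∃! j, j ∈ Finset.range (LL m n) ∧ DomAt m n S j := by
  -- no two dominant starting points
  have huniq : ∀ j1 j2, j1 < j2 → j2 < LL m n → DomAt m n S j1 → DomAt m n S j2 → False := by
    intro j1 j2 h12 h2 hd1 hd2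
    have e1 : p m n S j1 + 1 ≤ p m n S j2 := by
      have := hd1 (j2 - j1 - 1) (by omega)
      have he : j1 + (j2 - j1 - 1) + 1 = j2 := by omega
      rwa [he] at this
    have e2 : p m n S j2 + 1 ≤ p m n S (j1 + LL m n) := by
      have := hd2 (j1 + LL m n - j2 - 1) (by omega)
      have he : j2 + (j1 + LL m n - j2 - 1) + 1 = j1 + LL m n := by omega
      rwa [he] at this
    rw [p_add_LL m n S hS hc] at e2
    linarith
  obtain ⟨i0, hi0mem, hi0⟩ := Finset.exists_min_image (Finset.range (LL m n)) (p m n S)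
    ⟨0, Finset.mem_range.mpr (LL_pos m n)⟩
  set F := (Finset.range (LL m n)).filter (fun i => p m n S i = p m n S i0) with hF
  have hFne : F.Nonempty := ⟨i0, Finset.mem_filter.mpr ⟨hi0mem, rfl⟩⟩
  set j := F.max' hFne with hj
  have hjF : j ∈ F := F.max'_mem hFne
  obtain ⟨hjrange, hjval⟩ := Finset.mem_filter.mp hjF
  have hjlt : j < LL m n := Finset.mem_range.mp hjrange
  have hdom : DomAt m n S j := by
    intro k hk
    by_cases h : j + k + 1 < LL m n
    · have h1 : p m n S i0 ≤ p m n S (j + k + 1) := hi0 _ (Finset.mem_range.mpr h)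
      have h2 : p m n S (j + k + 1) ≠ p m n S i0 := by
        intro heq
        have hmem : j + k + 1 ∈ F := Finset.mem_filter.mpr ⟨Finset.mem_range.mpr h, heq⟩
        have := Finset.le_max' F _ hmem
        omega
      have : p m n S i0 < p m n S (j + k + 1) := lt_of_le_of_ne h1 (Ne.symm h2)
      rw [hjval]
      omega
    · have he : j + k + 1 = (j + k + 1 - LL m n) + LL m n := by omega
      rw [he, p_add_LL m n S hS hc]
      have hlt : j + k + 1 - LL m n < LL m n := by omega
      have := hi0 _ (Finset.mem_range.mpr hlt)
      rw [hjval]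
      omega
  refine ⟨j, ⟨hjrange, hdom⟩, ?_⟩
  rintro y ⟨hyr, hyd⟩
  have hylt : y < LL m n := Finset.mem_range.mp hyr
  rcases lt_trichotomy y j with h | h | h
  · exact absurd (huniq y j h hjlt hyd hdom) (by simp)
  · exact h
  · exact absurd (huniq j y h hylt hdom hyd) (by simp)
lemma mem_rot {m n j x : ℕ} {S : Finset ℕ} :
    x ∈ rot m n j S ↔ x < LL m n ∧ (x + j) % LL m n ∈ S := by
  simp [rot, Finset.mem_filter, Finset.mem_range]

lemma key_mod (m n : ℕ) (x a b : ℕ) (h : (a + b) % LL m n = 0) :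
    ((x + a) % LL m n + b) % LL m n = x % LL m n := by
  rw [Nat.mod_add_mod]
  have hd : LL m n ∣ (a + b) := Nat.dvd_of_mod_eq_zero h
  obtain ⟨c, hc⟩ := hd
  have : x + a + b = x + LL m n * c := by omega
  rw [this, Nat.add_mul_mod_self_left]

lemma rot_rot {m n j j' : ℕ} {S : Finset ℕ} (hS : S ⊆ Finset.range (LL m n))
    (h : (j' + j) % LL m n = 0) : rot m n j (rot m n j' S) = S := by
  ext x
  rw [mem_rot, mem_rot]
  constructor
  · rintro ⟨hx, -, hmem⟩
    rwa [key_mod m n x j j' (by rwa [Nat.add_comm] at h), Nat.mod_eq_of_lt hx] at hmem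
  · intro hx
    have hxlt : x < LL m n := Finset.mem_range.mp (hS hx)
    refine ⟨hxlt, Nat.mod_lt _ (LL_pos m n), ?_⟩
    rwa [key_mod m n x j j' (by rwa [Nat.add_comm] at h), Nat.mod_eq_of_lt hxlt]

lemma rot_card {m n j : ℕ} {S : Finset ℕ} (hS : S ⊆ Finset.range (LL m n)) :
    (rot m n j S).card = S.card := by
  set j' := LL m n - j % LL m n with hj'
  have hmod : (j + j') % LL m n = 0 := by
    have h1 : j % LL m n < LL m n := Nat.mod_lt _ (LL_pos m n)
    have h2 : j = LL m n * (j / LL m n) + j % LL m n := (Nat.div_add_mod j (LL m n)).symm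
    have h3 : LL m n * (j / LL m n + 1) = LL m n * (j / LL m n) + LL m n := by ring
    have : j + j' = LL m n * (j / LL m n + 1) := by omega
    rw [this, Nat.mul_mod_right]
  apply Finset.card_bij' (fun x _ => (x + j) % LL m n) (fun y _ => (y + j') % LL m n)
  · intro x hx
    exact (mem_rot.mp hx).2
  · intro y hy
    have hylt : y < LL m n := Finset.mem_range.mp (hS hy)
    rw [mem_rot]
    refine ⟨Nat.mod_lt _ (LL_pos m n), ?_⟩
    rwa [key_mod m n y j' j (by rwa [Nat.add_comm] at hmod), Nat.mod_eq_of_lt hylt]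
  · intro x hx
    rw [key_mod m n x j j' hmod, Nat.mod_eq_of_lt (mem_rot.mp hx).1]
  · intro y hy
    rw [key_mod m n y j' j (by rwa [Nat.add_comm] at hmod),
      Nat.mod_eq_of_lt (Finset.mem_range.mp (hS hy))]

lemma p_rot (m n : ℕ) (S : Finset ℕ) (j k : ℕ) :
    p m n (rot m n j S) k = p m n S (j + k) - p m n S j := by
  induction k with
  | zero => simp [p]
  | succ k ih =>
    have hw : w m n (rot m n j S) k = w m n S (j + k) := by
      unfold w
      have : k % LL m n ∈ rot m n j S ↔ (j + k) % LL m n ∈ S := by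
        rw [mem_rot]
        constructor
        · rintro ⟨-, h⟩
          rwa [Nat.mod_add_mod, Nat.add_comm k j] at h
        · intro h
          exact ⟨Nat.mod_lt _ (LL_pos m n), by rwa [Nat.mod_add_mod, Nat.add_comm k j]⟩
      split_ifs with h1 h2 h2
      · rfl
      · exact absurd (this.mp h1) h2
      · exact absurd (this.mpr h2) h1
      · rfl
    rw [p_succ, hw, ih, ← Nat.add_assoc, p_succ]
    ring

lemma domAt_rot (m n : ℕ) (S : Finset ℕ) (j : ℕ) :
    DomAt m n (rot m n j S) 0 ↔ DomAt m n S j := by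
  unfold DomAt
  constructor
  · intro h k hk
    have := h k hk
    rw [p_rot, p_rot] at this
    simp only [Nat.add_zero, Nat.zero_add] at this
    have he : j + (k + 1) = j + k + 1 := by omega
    rw [he] at this
    omega
  · intro h k hk
    have := h k hk
    rw [p_rot, p_rot]
    simp only [Nat.add_zero, Nat.zero_add]
    have he : j + (k + 1) = j + k + 1 := by omega
    rw [he]
    omega
lemma rot_subset (m n j : ℕ) (S : Finset ℕ) : rot m n j S ⊆ Finset.range (LL m n) :=
  Finset.filter_subset _ _

lemma card_P_eq (m n : ℕ) : (P m n).card = LL m n * (D m n).card := by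
  have step1 : ∀ S ∈ P m n,
      ((Finset.range (LL m n)).filter (fun j => DomAt m n S j)).card = 1 := by
    intro S hS
    obtain ⟨hsub, hc⟩ := mem_P.mp hS
    obtain ⟨j, ⟨hjr, hjd⟩, huniq⟩ := exists_unique_domAt m n S hsub hc
    rw [Finset.card_eq_one]
    refine ⟨j, ?_⟩
    ext y
    simp only [Finset.mem_filter, Finset.mem_singleton]
    constructor
    · rintro ⟨h1, h2⟩; exact huniq y ⟨h1, h2⟩
    · rintro rfl; exact ⟨hjr, hjd⟩
  have step2 : ∀ j < LL m n,
      ((P m n).filter (fun S => DomAt m n S j)).card = (D m n).card := by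
    intro j hj
    set j' := LL m n - j with hj'def
    have hjj' : (j + j') % LL m n = 0 := by
      have : j + j' = LL m n := by omega
      rw [this, Nat.mod_self]
    have hj'j : (j' + j) % LL m n = 0 := by rwa [Nat.add_comm] at hjj'
    apply Finset.card_bij' (fun S _ => rot m n j S) (fun T _ => rot m n j' T)
    · intro S hS
      obtain ⟨hsub, hc⟩ := (Finset.mem_filter.mp hS)
      obtain ⟨hsub', hcard⟩ := mem_P.mp hsub
      refine Finset.mem_filter.mpr ⟨mem_P.mpr ⟨rot_subset m n j S, ?_⟩, ?_⟩
      · rw [rot_card hsub']; exact hcard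
      · rw [domAt_rot]; exact hc
    · intro T hT
      obtain ⟨hsub, hd⟩ := Finset.mem_filter.mp hT
      obtain ⟨hsub', hcard⟩ := mem_P.mp hsub
      refine Finset.mem_filter.mpr ⟨mem_P.mpr ⟨rot_subset m n j' T, ?_⟩, ?_⟩
      · rw [rot_card hsub']; exact hcard
      · rw [← domAt_rot m n _ j, rot_rot hsub' hj'j]
        exact hd
    · intro S hS
      obtain ⟨hsub, _⟩ := Finset.mem_filter.mp hS
      obtain ⟨hsub', _⟩ := mem_P.mp hsub
      exact rot_rot hsub' hjj'
    · intro T hT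
      obtain ⟨hsub, _⟩ := Finset.mem_filter.mp hT
      obtain ⟨hsub', _⟩ := mem_P.mp hsub
      exact rot_rot hsub' hj'j
  calc (P m n).card = ∑ S ∈ P m n, 1 := by simp
    _ = ∑ S ∈ P m n, ((Finset.range (LL m n)).filter (fun j => DomAt m n S j)).card := by
        apply Finset.sum_congr rfl
        intro S hS
        exact (step1 S hS).symm
    _ = ∑ S ∈ P m n, ∑ j ∈ Finset.range (LL m n), (if DomAt m n S j then 1 else 0) := by
        apply Finset.sum_congr rfl
        intro S _
        rw [Finset.card_filter]
    _ = ∑ j ∈ Finset.range (LL m n), ∑ S ∈ P m n, (if DomAt m n S j then 1 else 0) :=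
        Finset.sum_comm
    _ = ∑ j ∈ Finset.range (LL m n), ((P m n).filter (fun S => DomAt m n S j)).card := by
        apply Finset.sum_congr rfl
        intro j _
        rw [Finset.card_filter]
    _ = ∑ j ∈ Finset.range (LL m n), (D m n).card := by
        apply Finset.sum_congr rfl
        intro j hj
        exact step2 j (Finset.mem_range.mp hj)
    _ = LL m n * (D m n).card := by
        rw [Finset.sum_const, Finset.card_range, smul_eq_mul]
/-- the positions of the `-m` steps of the word associated with a Dyck path -/
def v (m n : ℕ) (a : ℕ → ℕ) (j : ℕ) : ℕ := (m + 1) * (j + 1) + a (n - j)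

def Phi (m n : ℕ) (a : ℕ → ℕ) : Finset ℕ := (Finset.range n).image (v m n a)

section
variable {m n : ℕ} {a : ℕ → ℕ}

lemma a_le (ha : IsMDyckPath m n a) : ∀ i, 1 ≤ i → a i ≤ m * (i - 1) := by
  obtain ⟨h1, h2, h3⟩ := ha
  intro i
  induction i with
  | zero => omega
  | succ i ih =>
    intro _
    rw [Nat.add_sub_cancel]
    by_cases hi : 1 ≤ i
    · by_cases hin : i < n
      · have := h2 i hi hin
        have := ih hi
        have : m * (i - 1) + m = m * i := by
          have : i - 1 + 1 = i := by omega
          calc m * (i - 1) + m = m * (i - 1 + 1) := by ring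
            _ = m * i := by rw [this]
        omega
      · have := h3 (i + 1) (by omega)
        omega
    · have : i = 0 := by omega
      subst this
      simp [h1]

lemma v_lt (ha : IsMDyckPath m n a) {j : ℕ} (hj : j < n) : v m n a j < LL m n := by
  have h1 : a (n - j) ≤ m * (n - j - 1) := a_le ha (n - j) (by omega)
  set t := n - j - 1 with ht
  have h2 : n - j = t + 1 := by omega
  rw [h2] at h1
  unfold v LL
  rw [h2]
  have e1 : (m + 1) * n + 1 = (m + 1) * (j + 1) + (m * t + t) + 1 := by
    rw [show n = j + 1 + t by omega]; ring
  omega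

lemma v_strictMono (ha : IsMDyckPath m n a) {j j' : ℕ} (h : j < j') (hj' : j' < n) :
    v m n a j < v m n a j' := by
  obtain ⟨h1, h2, h3⟩ := ha
  have step : ∀ k, k + 1 < n → v m n a k < v m n a (k + 1) := by
    intro k hk
    unfold v
    have hd : a (n - k) ≤ a (n - k - 1) + m := by
      have := h2 (n - k - 1) (by omega) (by omega)
      have he : n - k - 1 + 1 = n - k := by omega
      rwa [he] at this
    have he2 : n - (k + 1) = n - k - 1 := by omega
    rw [he2]
    have e1 : (m + 1) * (k + 1 + 1) = (m + 1) * (k + 1) + m + 1 := by ring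
    omega
  -- iterate
  clear h1 h2 h3
  induction j' with
  | zero => omega
  | succ j' ih =>
    by_cases hjj : j = j'
    · subst hjj; exact step j (by omega)
    · have := ih (by omega) (by omega)
      exact this.trans (step j' (by omega))

lemma Phi_mem_D (hn : 0 < n) (ha : IsMDyckPath m n a) : Phi m n a ∈ D m n := by
  have hsub : Phi m n a ⊆ Finset.range (LL m n) := by
    intro x hx
    obtain ⟨j, hj, rfl⟩ := Finset.mem_image.mp hx
    exact Finset.mem_range.mpr (v_lt ha (Finset.mem_range.mp hj))
  have hinj : Set.InjOn (v m n a) (Finset.range n) := by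
    intro x hx y hy hxy
    by_contra hne
    rcases Nat.lt_or_ge x y with h | h
    · exact absurd hxy (Nat.ne_of_lt (v_strictMono ha h (Finset.mem_range.mp hy)))
    · have : y < x := by omega
      exact absurd hxy.symm (Nat.ne_of_lt (v_strictMono ha this (Finset.mem_range.mp hx)))
  have hcard : (Phi m n a).card = n := by
    rw [Phi, Finset.card_image_of_injOn hinj, Finset.card_range]
  refine Finset.mem_filter.mpr ⟨mem_P.mpr ⟨hsub, hcard⟩, ?_⟩
  intro k hk
  simp only [Nat.zero_add]
  rw [p_zero, p_eq m n _ hsub (k + 1) (by omega)]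
  -- count elements < k + 1
  set c := ((Phi m n a).filter (· < k + 1)).card with hc
  suffices hsuff : (m + 1) * c ≤ k by
    have hsuff' : ((m : ℤ) + 1) * (c : ℤ) ≤ (k : ℤ) := by exact_mod_cast hsuff
    omega
  set J := (Finset.range n).filter (fun j => v m n a j < k + 1) with hJ
  have himg : (Phi m n a).filter (· < k + 1) = J.image (v m n a) := by
    unfold Phi
    ext x
    constructor
    · intro hx
      obtain ⟨hx1, hx2⟩ := Finset.mem_filter.mp hx
      obtain ⟨j, hj, rfl⟩ := Finset.mem_image.mp hx1
      exact Finset.mem_image.mpr ⟨j, Finset.mem_filter.mpr ⟨hj, hx2⟩, rfl⟩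
    · intro hx
      obtain ⟨j, hj, rfl⟩ := Finset.mem_image.mp hx
      obtain ⟨hj1, hj2⟩ := Finset.mem_filter.mp hj
      exact Finset.mem_filter.mpr ⟨Finset.mem_image.mpr ⟨j, hj1, rfl⟩, hj2⟩
  have hcJ : c = J.card := by
    rw [hc, himg, Finset.card_image_of_injOn (hinj.mono (by
      intro x hx
      simp only [J, Finset.coe_filter, Set.mem_setOf_eq] at hx
      exact Finset.mem_coe.mpr hx.1))]
  rcases Finset.eq_empty_or_nonempty J with hJe | hJne
  · rw [hcJ, hJe]
    simp
  · set jm := J.max' hJne with hjm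
    have hjmJ : jm ∈ J := J.max'_mem hJne
    obtain ⟨hjmn, hjmk⟩ := Finset.mem_filter.mp hjmJ
    have hjmn' : jm < n := Finset.mem_range.mp hjmn
    have hcle : c ≤ jm + 1 := by
      rw [hcJ]
      have : J ⊆ Finset.range (jm + 1) := by
        intro x hx
        exact Finset.mem_range.mpr (by have := Finset.le_max' J x hx; omega)
      calc J.card ≤ (Finset.range (jm + 1)).card := Finset.card_le_card this
        _ = jm + 1 := Finset.card_range _
    have hvlow : (m + 1) * (jm + 1) ≤ v m n a jm := by
      unfold v; omega
    calc (m + 1) * c ≤ (m + 1) * (jm + 1) := Nat.mul_le_mul_left _ hcle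
      _ ≤ v m n a jm := hvlow
      _ ≤ k := by omega
end

section
variable {m n : ℕ} {a : ℕ → ℕ}

lemma v_injOn (ha : IsMDyckPath m n a) : Set.InjOn (v m n a) (Finset.range n) := by
  intro x hx y hy hxy
  by_contra hne
  rcases Nat.lt_or_ge x y with h | h
  · exact absurd hxy (Nat.ne_of_lt (v_strictMono ha h (Finset.mem_range.mp hy)))
  · have : y < x := by omega
    exact absurd hxy.symm (Nat.ne_of_lt (v_strictMono ha this (Finset.mem_range.mp hx)))

lemma count_lt (ha : IsMDyckPath m n a) {j : ℕ} (hj : j < n) :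
    ((Phi m n a).filter (· < v m n a j)).card = j := by
  have heq : (Phi m n a).filter (· < v m n a j) = (Finset.range j).image (v m n a) := by
    unfold Phi
    ext x
    constructor
    · intro hx
      obtain ⟨hx1, hx2⟩ := Finset.mem_filter.mp hx
      obtain ⟨j', hj', rfl⟩ := Finset.mem_image.mp hx1
      have hj'n : j' < n := Finset.mem_range.mp hj'
      have : j' < j := by
        by_contra hge
        rcases Nat.lt_or_ge j j' with h | h
        · exact absurd (v_strictMono ha h hj'n) (by omega)
        · have : j = j' := by omega
          subst this
          omega
      exact Finset.mem_image.mpr ⟨j', Finset.mem_range.mpr this, rfl⟩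
    · intro hx
      obtain ⟨j', hj', rfl⟩ := Finset.mem_image.mp hx
      have hj'j : j' < j := Finset.mem_range.mp hj'
      refine Finset.mem_filter.mpr ⟨Finset.mem_image.mpr ⟨j', Finset.mem_range.mpr (by omega), rfl⟩, ?_⟩
      exact v_strictMono ha hj'j hj
  rw [heq, Finset.card_image_of_injOn ((v_injOn ha).mono (by
    intro x hx
    have : x < j := by simpa using hx
    simp only [Finset.coe_range, Set.mem_Iio]
    omega)), Finset.card_range]

lemma v_congr {a' : ℕ → ℕ} (ha : IsMDyckPath m n a) (ha' : IsMDyckPath m n a')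
    (h : Phi m n a = Phi m n a') {j : ℕ} (hj : j < n) : ¬ (v m n a j < v m n a' j) := by
  intro hlt
  have hx : v m n a j ∈ Phi m n a' := by
    rw [← h]
    exact Finset.mem_image.mpr ⟨j, Finset.mem_range.mpr hj, rfl⟩
  have c1 : ((Phi m n a').filter (· < v m n a j)).card = j := by
    rw [← h]; exact count_lt ha hj
  have c2 : ((Phi m n a').filter (· < v m n a' j)).card = j := count_lt ha' hj
  have hsub : insert (v m n a j) ((Phi m n a').filter (· < v m n a j)) ⊆
      (Phi m n a').filter (· < v m n a' j) := by
    intro x hx'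
    rcases Finset.mem_insert.mp hx' with rfl | hx'
    · exact Finset.mem_filter.mpr ⟨hx, hlt⟩
    · obtain ⟨h1, h2⟩ := Finset.mem_filter.mp hx'
      exact Finset.mem_filter.mpr ⟨h1, by omega⟩
  have hnotmem : v m n a j ∉ (Phi m n a').filter (· < v m n a j) := by
    intro hmem
    exact absurd (Finset.mem_filter.mp hmem).2 (by omega)
  have := Finset.card_le_card hsub
  rw [Finset.card_insert_of_notMem hnotmem, c1, c2] at this
  omega

lemma Phi_inj {a' : ℕ → ℕ} (ha : IsMDyckPath m n a) (ha' : IsMDyckPath m n a')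
    (h : Phi m n a = Phi m n a') : a = a' := by
  have hv : ∀ j < n, v m n a j = v m n a' j := by
    intro j hj
    have h1 := v_congr ha ha' h hj
    have h2 := v_congr ha' ha h.symm hj
    omega
  funext i
  by_cases hi : 1 ≤ i ∧ i ≤ n
  · obtain ⟨hi1, hi2⟩ := hi
    have hj : n - i < n := by omega
    have := hv (n - i) hj
    unfold v at this
    rw [show n - (n - i) = i by omega] at this
    omega
  · have h1 := ha.2.2 i (by omega)
    have h2 := ha'.2.2 i (by omega)
    omega

end

section
variable {m n : ℕ}

lemma Phi_surj (hn : 0 < n) {T : Finset ℕ} (hT : T ∈ D m n) :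
    ∃ a, IsMDyckPath m n a ∧ Phi m n a = T := by
  obtain ⟨hP, hdom⟩ := Finset.mem_filter.mp hT
  obtain ⟨hsub, hcard⟩ := mem_P.mp hP
  -- an increasing enumeration of `T`
  obtain ⟨f, hfmono, hfmem⟩ :
      ∃ f : Fin n → ℕ, StrictMono f ∧ ∀ x, x ∈ T ↔ ∃ i, f i = x := by
    set s := T.orderIsoOfFin hcard with hs
    refine ⟨fun i => (s i : ℕ), ?_, ?_⟩
    · intro i j hij
      exact_mod_cast s.strictMono hij
    · intro x
      constructor
      · intro hx
        exact ⟨s.symm ⟨x, hx⟩, congrArg Subtype.val (s.apply_symm_apply ⟨x, hx⟩)⟩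
      · rintro ⟨i, rfl⟩
        exact (s i).2
  have hlt : ∀ x ∈ T, x < LL m n := fun x hx => Finset.mem_range.mp (hsub hx)
  -- lower bound on the elements
  have hlow : ∀ j : Fin n, (m + 1) * ((j : ℕ) + 1) ≤ f j := by
    intro j
    have hxT : f j ∈ T := (hfmem _).mpr ⟨j, rfl⟩
    have hxlt : f j < LL m n := hlt _ hxT
    have hd := hdom (f j) hxlt
    rw [p_zero] at hd
    simp only [Nat.zero_add] at hd
    rw [p_eq m n T hsub (f j + 1) (by omega)] at hd
    set c := (T.filter (· < f j + 1)).card with hc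
    have hcge : (j : ℕ) + 1 ≤ c := by
      have himg : (Finset.Iic j).image f ⊆ T.filter (· < f j + 1) := by
        intro y hy
        obtain ⟨i, hi, rfl⟩ := Finset.mem_image.mp hy
        have hile : i ≤ j := Finset.mem_Iic.mp hi
        have : f i ≤ f j := hfmono.monotone hile
        exact Finset.mem_filter.mpr ⟨(hfmem _).mpr ⟨i, rfl⟩, by omega⟩
      calc (j : ℕ) + 1 = (Finset.Iic j).card := (Fin.card_Iic j).symm
        _ = ((Finset.Iic j).image f).card :=
            (Finset.card_image_of_injective _ hfmono.injective).symm
        _ ≤ c := Finset.card_le_card himg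
    have hcz : ((m : ℤ) + 1) * (c : ℤ) ≤ (f j : ℤ) := by omega
    have h2 : ((m : ℤ) + 1) * ((j : ℕ) + 1 : ℤ) ≤ ((m : ℤ) + 1) * (c : ℤ) := by
      apply mul_le_mul_of_nonneg_left _ (by positivity)
      exact_mod_cast hcge
    have hfin : ((m : ℤ) + 1) * ((j : ℕ) + 1 : ℤ) ≤ (f j : ℤ) := le_trans h2 hcz
    exact_mod_cast hfin
  -- a proof-free version of the enumeration
  set g : ℕ → ℕ := fun j => if hj : j < n then f ⟨j, hj⟩ else 0 with hg
  have hgval : ∀ j (hj : j < n), g j = f ⟨j, hj⟩ := by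
    intro j hj
    simp only [hg]
    rw [dif_pos hj]
  have hglow : ∀ j, j < n → (m + 1) * (j + 1) ≤ g j := by
    intro j hj
    rw [hgval j hj]
    exact hlow ⟨j, hj⟩
  have hgmem : ∀ j, j < n → g j ∈ T := by
    intro j hj
    rw [hgval j hj]
    exact (hfmem _).mpr ⟨_, rfl⟩
  have hgsurj : ∀ x ∈ T, ∃ j, j < n ∧ g j = x := by
    intro x hx
    obtain ⟨i, rfl⟩ := (hfmem _).mp hx
    exact ⟨(i : ℕ), i.2, hgval _ i.2⟩
  have hgmono : ∀ j j', j < j' → j' < n → g j < g j' := by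
    intro j j' hjj hj'
    rw [hgval j (by omega), hgval j' hj']
    exact hfmono (by simp only [Fin.mk_lt_mk]; omega)
  have hglt : ∀ j, j < n → g j < LL m n := fun j hj => hlt _ (hgmem j hj)
  clear hlow hgval hfmem hfmono
  -- the candidate path
  set A : ℕ → ℕ := fun i =>
    if 1 ≤ i ∧ i ≤ n then g (n - i) - (m + 1) * (n + 1 - i) else 0 with hA
  have hAval : ∀ i, 1 ≤ i → i ≤ n → A i = g (n - i) - (m + 1) * (n + 1 - i) := by
    intro i h1 h2
    simp only [hA]
    rw [if_pos ⟨h1, h2⟩]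
  have htop : g (n - 1) = (m + 1) * n := by
    have h1 := hglow (n - 1) (by omega)
    have h2 := hglt (n - 1) (by omega)
    simp only [LL] at h2
    have e : (m + 1) * ((n - 1) + 1) = (m + 1) * n := by
      rw [show n - 1 + 1 = n by omega]
    omega
  have hdyck : IsMDyckPath m n A := by
    refine ⟨?_, ?_, ?_⟩
    · rw [hAval 1 le_rfl hn, htop, show n + 1 - 1 = n by omega, Nat.sub_self]
    · intro i hi1 hi2
      rw [hAval (i + 1) (by omega) (by omega), hAval i hi1 (by omega)]
      have hmono : g (n - (i + 1)) < g (n - i) := hgmono _ _ (by omega) (by omega)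
      have hl1 := hglow (n - (i + 1)) (by omega)
      have hl2 := hglow (n - i) (by omega)
      have e1 : n + 1 - (i + 1) = n - i := by omega
      have e2 : n + 1 - i = (n - i) + 1 := by omega
      have e3 : (m + 1) * ((n - (i + 1)) + 1) = (m + 1) * (n - i) := by
        rw [show n - (i + 1) + 1 = n - i by omega]
      have e4 : (m + 1) * ((n - i) + 1) = (m + 1) * (n - i) + m + 1 := by ring
      rw [e1, e2]
      omega
    · intro i hi
      simp only [hA]
      rw [if_neg (by omega)]
  refine ⟨A, hdyck, ?_⟩
  have hval : ∀ j, j < n → v m n A j = g j := by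
    intro j hj
    unfold v
    rw [hAval (n - j) (by omega) (by omega)]
    rw [show n - (n - j) = j by omega, show n + 1 - (n - j) = j + 1 by omega]
    have := hglow j hj
    omega
  unfold Phi
  ext x
  constructor
  · intro hx
    obtain ⟨j, hj, rfl⟩ := Finset.mem_image.mp hx
    rw [hval j (Finset.mem_range.mp hj)]
    exact hgmem _ (Finset.mem_range.mp hj)
  · intro hx
    obtain ⟨j, hj, rfl⟩ := hgsurj x hx
    exact Finset.mem_image.mpr ⟨j, Finset.mem_range.mpr hj, hval j hj⟩

end

end MDyckAux

open MDyckAux in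
/-- The number of `m`-Dyck paths of semilength `n` equals the Fuß-Catalan number
`(1/(mn+1)) * C((m+1)n, n)`. -/
theorem card_mDyckPaths (m n : ℕ) (hm : 0 < m) (hn : 0 < n) :
    {a : ℕ → ℕ | IsMDyckPath m n a}.ncard * (m * n + 1) = Nat.choose ((m + 1) * n) n := by
  -- the set of Dyck paths is in bijection with the dominant words
  have hbij : Nat.card {a : ℕ → ℕ // IsMDyckPath m n a} = (D m n).card := by
    have hF : Function.Bijective
        (fun a : {a : ℕ → ℕ // IsMDyckPath m n a} =>
          (⟨Phi m n a.1, Phi_mem_D hn a.2⟩ : {S // S ∈ D m n})) := by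
      constructor
      · intro a b hab
        exact Subtype.ext (Phi_inj a.2 b.2 (congrArg Subtype.val hab))
      · rintro ⟨T, hT⟩
        obtain ⟨a, ha, hPhi⟩ := Phi_surj hn hT
        exact ⟨⟨a, ha⟩, Subtype.ext hPhi⟩
    rw [Nat.card_eq_of_bijective _ hF, Nat.card_eq_finsetCard]
  have hncard : {a : ℕ → ℕ | IsMDyckPath m n a}.ncard = (D m n).card := by
    rw [← Nat.card_coe_set_eq]
    exact hbij
  -- the cycle-lemma count
  have hcount : Nat.choose (LL m n) n = LL m n * (D m n).card := by
    have := card_P_eq m n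
    rwa [P, Finset.card_powersetCard, Finset.card_range] at this
  -- binomial arithmetic
  set N := (m + 1) * n with hN
  have hLLN : LL m n = N + 1 := rfl
  have hNval : N = m * n + n := by rw [hN]; ring
  have hs1 : Nat.choose (N + 1) ((N + 1) - n) = Nat.choose (N + 1) n :=
    Nat.choose_symm (by omega)
  have he1 : (N + 1) - n = m * n + 1 := by omega
  have hs2 : Nat.choose N (N - (m * n)) = Nat.choose N (m * n) :=
    Nat.choose_symm (by omega)
  have he2 : N - m * n = n := by omega
  have hmain : (N + 1) * Nat.choose N n = Nat.choose (N + 1) n * (m * n + 1) := by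
    calc (N + 1) * Nat.choose N n = (N + 1) * Nat.choose N (m * n) := by
          rw [← hs2, he2]
      _ = Nat.choose (N + 1) (m * n + 1) * (m * n + 1) := Nat.add_one_mul_choose_eq N (m * n)
      _ = Nat.choose (N + 1) n * (m * n + 1) := by rw [← he1, hs1]
  apply Nat.eq_of_mul_eq_mul_left (show 0 < N + 1 by omega)
  calc (N + 1) * ({a : ℕ → ℕ | IsMDyckPath m n a}.ncard * (m * n + 1))
      = ((N + 1) * (D m n).card) * (m * n + 1) := by rw [hncard]; ring
    _ = Nat.choose (N + 1) n * (m * n + 1) := by rw [← hLLN, ← hcount, hLLN]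
    _ = (N + 1) * Nat.choose N n := hmain.symm
end

section
/- For the dihedral group I_2(k), q^{mk} · Cat^(m)(I_2(k); q, q^{−1}) = [2+mk]_q [k+mk]_q / ([2]_q [k]_q), where Cat^(m)(I_2(k); q, t) = ∑_{j=0}^m (qt)^{m−j} [jk+1]_{q,t}. -/
open Finset

/-- The `q`-integer `[n]_x = 1 + x + … + x^{n-1}` evaluated at a rational function `x`. -/
noncomputable def qIntF (n : ℕ) (x : RatFunc ℚ) : RatFunc ℚ := ∑ i ∈ Finset.range n, x ^ i

/-- The `q,t`-integer `[n]_{x,y} = x^{n-1} + x^{n-2} y + … + y^{n-1}`. -/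
noncomputable def qtIntF (n : ℕ) (x y : RatFunc ℚ) : RatFunc ℚ :=
  ∑ i ∈ Finset.range n, x ^ (n - 1 - i) * y ^ i

/-- The `q,t`-Fuß-Catalan number of `I_2(k)`,
`Cat^(m)(I_2(k); x, y) = ∑_{j=0}^m (xy)^{m-j} [jk+1]_{x,y}`. -/
noncomputable def qtCatDihedralF (m k : ℕ) (x y : RatFunc ℚ) : RatFunc ℚ :=
  ∑ j ∈ Finset.range (m + 1), (x * y) ^ (m - j) * qtIntF (j * k + 1) x y

lemma lemA (x : RatFunc ℚ) (hx : x ≠ 0) (n : ℕ) :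
    x ^ (n - 1) * qtIntF n x x⁻¹ = ∑ i ∈ Finset.range n, (x ^ 2) ^ i := by
  unfold qtIntF
  rw [Finset.mul_sum, ← Finset.sum_range_reflect (fun i => (x ^ 2) ^ i) n]
  refine Finset.sum_congr rfl fun i hi => ?_
  have hi' : i ≤ n - 1 := Nat.le_sub_one_of_lt (Finset.mem_range.mp hi)
  have h1 : x ^ (n - 1) = x ^ (n - 1 - i) * x ^ i := by
    rw [← pow_add, Nat.sub_add_cancel hi']
  rw [h1, inv_pow]
  field_simp
  ring

lemma key (m k : ℕ) :
    (RatFunc.X : RatFunc ℚ) ^ (m * k) * qtCatDihedralF m k RatFunc.X RatFunc.X⁻¹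
      * (((RatFunc.X : RatFunc ℚ) ^ 2 - 1) * ((RatFunc.X : RatFunc ℚ) ^ k - 1))
    = ((RatFunc.X : RatFunc ℚ) ^ (m * k + 2) - 1) * ((RatFunc.X : RatFunc ℚ) ^ (m * k + k) - 1) := by
  set x : RatFunc ℚ := RatFunc.X with hxdef
  have hx : x ≠ 0 := RatFunc.X_ne_zero
  have step1 : x ^ (m * k) * qtCatDihedralF m k x x⁻¹ * (x ^ 2 - 1)
      = (x ^ (m * k + 2) - 1) * ∑ j ∈ Finset.range (m + 1), (x ^ k) ^ j := by
    unfold qtCatDihedralF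
    rw [Finset.mul_sum, Finset.sum_mul]
    have hterm : ∀ j ∈ Finset.range (m + 1),
        x ^ (m * k) * ((x * x⁻¹) ^ (m - j) * qtIntF (j * k + 1) x x⁻¹) * (x ^ 2 - 1)
        = x ^ (m * k + 2) * (x ^ k) ^ j - (x ^ k) ^ (m - j) := by
      intro j hj
      have hj' : j ≤ m := Nat.lt_succ_iff.mp (Finset.mem_range.mp hj)
      obtain ⟨d, rfl⟩ := Nat.exists_eq_add_of_le hj'
      rw [mul_inv_cancel₀ hx, one_pow, one_mul]
      have hA := lemA x hx (j * k + 1)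
      rw [Nat.add_sub_cancel] at hA
      have hsub : j + d - j = d := by omega
      rw [hsub]
      have hsplit : x ^ ((j + d) * k) = x ^ (d * k) * x ^ (j * k) := by
        rw [← pow_add]; congr 1; ring
      calc x ^ ((j + d) * k) * qtIntF (j * k + 1) x x⁻¹ * (x ^ 2 - 1)
          = x ^ (d * k) * ((x ^ (j * k) * qtIntF (j * k + 1) x x⁻¹) * (x ^ 2 - 1)) := by
            rw [hsplit]; ring
        _ = x ^ (d * k) * ((x ^ 2) ^ (j * k + 1) - 1) := by rw [hA, geom_sum_mul]
        _ = x ^ ((j + d) * k + 2) * (x ^ k) ^ j - (x ^ k) ^ d := by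
            rw [mul_sub, mul_one, ← pow_mul, ← pow_mul, ← pow_mul, ← pow_add, ← pow_add,
              show d * k + 2 * (j * k + 1) = (j + d) * k + 2 + k * j from by ring,
              show d * k = k * d from by ring]
    rw [Finset.sum_congr rfl hterm, Finset.sum_sub_distrib, ← Finset.mul_sum]
    have hrefl : ∑ j ∈ Finset.range (m + 1), (x ^ k) ^ (m - j)
        = ∑ j ∈ Finset.range (m + 1), (x ^ k) ^ j := by
      rw [← Finset.sum_range_reflect (fun j => (x ^ k) ^ j) (m + 1)]
      exact Finset.sum_congr rfl fun j hj => by rw [Nat.succ_sub_one]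
    rw [hrefl]
    ring
  calc x ^ (m * k) * qtCatDihedralF m k x x⁻¹ * ((x ^ 2 - 1) * (x ^ k - 1))
      = (x ^ (m * k) * qtCatDihedralF m k x x⁻¹ * (x ^ 2 - 1)) * (x ^ k - 1) := by ring
    _ = (x ^ (m * k + 2) - 1) * ((∑ j ∈ Finset.range (m + 1), (x ^ k) ^ j) * (x ^ k - 1)) := by
        rw [step1]; ring
    _ = (x ^ (m * k + 2) - 1) * (x ^ (m * k + k) - 1) := by
        rw [geom_sum_mul, ← pow_mul, show k * (m + 1) = m * k + k from by ring]

/-- For the dihedral group `I_2(k)`: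
`q^{mk} · Cat^(m)(I_2(k); q, q⁻¹) = [2+mk]_q [k+mk]_q / ([2]_q [k]_q)`. -/
theorem qtCatDihedral_specialization (m k : ℕ) (hm : 1 ≤ m) (hk : 2 ≤ k) :
    (RatFunc.X : RatFunc ℚ) ^ (m * k) * qtCatDihedralF m k RatFunc.X RatFunc.X⁻¹
      = qIntF (2 + m * k) RatFunc.X * qIntF (k + m * k) RatFunc.X
        / (qIntF 2 RatFunc.X * qIntF k RatFunc.X) := by

  set x : RatFunc ℚ := RatFunc.X with hxdef
  have hpow : ∀ n : ℕ, 1 ≤ n → x ^ n - 1 ≠ 0 := by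
    intro n hn
    have hmap : x ^ n - 1 = algebraMap (Polynomial ℚ) (RatFunc ℚ) (Polynomial.X ^ n - 1) := by
      rw [map_sub, map_pow, map_one, RatFunc.algebraMap_X]
    rw [hmap]
    rw [map_ne_zero_iff _ (IsFractionRing.injective (Polynomial ℚ) (RatFunc ℚ))]
    intro h
    have := congrArg (Polynomial.eval 0) h
    simp [zero_pow (by omega : n ≠ 0)] at this
  have hx1 : x - 1 ≠ 0 := by simpa using hpow 1 le_rfl
  have hxne1 : x ≠ 1 := sub_ne_zero.mp hx1
  have h2 : x ^ 2 - 1 ≠ 0 := hpow 2 (by omega)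
  have hkk : x ^ k - 1 ≠ 0 := hpow k (by omega)
  have hR : qIntF (2 + m * k) x * qIntF (k + m * k) x / (qIntF 2 x * qIntF k x)
      = (x ^ (2 + m * k) - 1) * (x ^ (k + m * k) - 1) / ((x ^ 2 - 1) * (x ^ k - 1)) := by
    unfold qIntF
    rw [geom_sum_eq hxne1, geom_sum_eq hxne1, geom_sum_eq hxne1, geom_sum_eq hxne1]
    field_simp
  rw [hR, eq_div_iff (mul_ne_zero h2 hkk), add_comm 2 (m * k), add_comm k (m * k)]
  exact key m k
end

section
/- For the cyclic group C_k acting as above, the det-isotypic component ℂ[x,y]^ε equals x·ℂ[x,y]^{C_k} + y^{k−1}·ℂ[x,y]^{C_k}. -/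
open MvPolynomial

/-- The action of the generator of the cyclic group `C_k` on `ℂ[x,y]`
(with `x = X 0`, `y = X 1`): `x ↦ ζ x`, `y ↦ ζ⁻¹ y`. -/
noncomputable def cyclicGen (ζ : ℂ) : MvPolynomial (Fin 2) ℂ →ₐ[ℂ] MvPolynomial (Fin 2) ℂ :=
  MvPolynomial.aeval ![MvPolynomial.C ζ * MvPolynomial.X 0, MvPolynomial.C ζ⁻¹ * MvPolynomial.X 1]

lemma gen_monomial (ζ : ℂ) (m : Fin 2 →₀ ℕ) (c : ℂ) :
    cyclicGen ζ (monomial m c) = C (ζ ^ m 0 * ζ⁻¹ ^ m 1) * monomial m c := by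
  rw [cyclicGen, aeval_monomial, monomial_eq,
    Finsupp.prod_fintype _ _ (fun i => pow_zero _),
    Finsupp.prod_fintype _ _ (fun i => pow_zero _)]
  simp only [Fin.prod_univ_two, Matrix.cons_val_zero, Matrix.cons_val_one, Matrix.head_cons,
    algebraMap_eq, mul_pow, ← C_pow, C_mul]
  ring

lemma gen_coeff (ζ : ℂ) (p : MvPolynomial (Fin 2) ℂ) (m : Fin 2 →₀ ℕ) :
    coeff m (cyclicGen ζ p) = ζ ^ m 0 * ζ⁻¹ ^ m 1 * coeff m p := by
  conv_lhs => rw [p.as_sum, map_sum]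
  rw [coeff_sum]
  simp only [gen_monomial, coeff_C_mul, coeff_monomial, mul_ite, mul_zero]
  rw [Finset.sum_ite_eq' p.support m]
  split
  · rfl
  · next h => rw [notMem_support_iff.mp h, mul_zero]

/-- For `C_k` acting on `ℂ[x,y]` as above (`ζ` a primitive `k`-th root of unity), the
det-isotypic component `ℂ[x,y]^ε` equals `x·ℂ[x,y]^{C_k} + y^{k-1}·ℂ[x,y]^{C_k}`. -/
theorem cyclic_det_component (k : ℕ) (hk : 1 ≤ k) (ζ : ℂ) (hζ : IsPrimitiveRoot ζ k) :
    {p : MvPolynomial (Fin 2) ℂ | cyclicGen ζ p = MvPolynomial.C ζ * p}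
      = {p : MvPolynomial (Fin 2) ℂ | ∃ r s : MvPolynomial (Fin 2) ℂ,
          cyclicGen ζ r = r ∧ cyclicGen ζ s = s ∧
          p = MvPolynomial.X 0 * r + MvPolynomial.X 1 ^ (k - 1) * s} := by
  have hζ0 : ζ ≠ 0 := hζ.ne_zero (by omega)
  have hpow : ζ ^ k = 1 := hζ.pow_eq_one
  have hk1 : ζ ^ (k - 1) = ζ⁻¹ := by
    apply eq_inv_of_mul_eq_one_left
    rw [← pow_succ, Nat.sub_add_cancel hk, hpow]
  have hinv : ζ⁻¹ ^ (k - 1) = ζ := by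
    rw [inv_pow, hk1, inv_inv]
  ext p
  simp only [Set.mem_setOf_eq]
  constructor
  · intro hp
    have key : ∀ m ∈ p.support, ζ ^ m 0 * ζ⁻¹ ^ m 1 = ζ := by
      intro m hm
      have h := congrArg (coeff m) hp
      rw [gen_coeff, coeff_C_mul] at h
      exact mul_right_cancel₀ (mem_support_iff.mp hm) h
    have hble : ∀ m ∈ p.support, m 0 = 0 → k - 1 ≤ m 1 := by
      intro m hm hm0
      have hkey := key m hm
      rw [hm0, pow_zero, one_mul] at hkey
      have h1 : ζ ^ (m 1 + 1) = 1 := by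
        have hz : ζ ^ m 1 = ζ⁻¹ := by
          rw [← inv_inv (ζ ^ m 1), ← inv_pow, hkey]
        rw [pow_succ, hz, inv_mul_cancel₀ hζ0]
      have hdvd := hζ.dvd_of_pow_eq_one _ h1
      have := Nat.le_of_dvd (Nat.succ_pos _) hdvd
      omega
    refine ⟨∑ m ∈ p.support.filter (fun m => m 0 ≠ 0),
        monomial (m - Finsupp.single 0 1) (coeff m p),
      ∑ m ∈ p.support.filter (fun m => ¬ m 0 ≠ 0),
        monomial (m - Finsupp.single 1 (k - 1)) (coeff m p), ?_, ?_, ?_⟩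
    · rw [map_sum]
      refine Finset.sum_congr rfl fun m hm => ?_
      rw [Finset.mem_filter] at hm
      obtain ⟨hm, hm0⟩ := hm
      rw [gen_monomial, Finsupp.tsub_apply, Finsupp.tsub_apply, Finsupp.single_eq_same,
        Finsupp.single_eq_of_ne' (by decide : (0 : Fin 2) ≠ 1), Nat.sub_zero]
      have hkey := key m hm
      have h2 : ζ * (ζ ^ (m 0 - 1) * ζ⁻¹ ^ m 1) = ζ * 1 := by
        rw [mul_one, ← mul_assoc, ← pow_succ', Nat.sub_add_cancel (by omega : 1 ≤ m 0)]
        exact hkey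
      rw [mul_left_cancel₀ hζ0 h2, map_one, one_mul]
    · rw [map_sum]
      refine Finset.sum_congr rfl fun m hm => ?_
      rw [Finset.mem_filter] at hm
      obtain ⟨hm, hm0⟩ := hm
      rw [not_not] at hm0
      have hkey := key m hm
      rw [hm0, pow_zero, one_mul] at hkey
      rw [gen_monomial, Finsupp.tsub_apply, Finsupp.tsub_apply, Finsupp.single_eq_same,
        Finsupp.single_eq_of_ne' (by decide : (1 : Fin 2) ≠ 0), Nat.sub_zero, hm0, pow_zero,
        one_mul, pow_sub₀ _ (inv_ne_zero hζ0) (hble m hm hm0), hkey, hinv, mul_inv_cancel₀ hζ0,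
        map_one, one_mul]
    · rw [Finset.mul_sum, Finset.mul_sum]
      conv_lhs => rw [p.as_sum,
        ← Finset.sum_filter_add_sum_filter_not p.support (fun m => m 0 ≠ 0)]
      congr 1
      · refine Finset.sum_congr rfl fun m hm => ?_
        rw [Finset.mem_filter] at hm
        rw [X, monomial_mul, one_mul,
          add_tsub_cancel_of_le (Finsupp.single_le_iff.mpr (by omega))]
      · refine Finset.sum_congr rfl fun m hm => ?_
        rw [Finset.mem_filter, not_not] at hm
        rw [X_pow_eq_monomial, monomial_mul, one_mul,
          add_tsub_cancel_of_le (Finsupp.single_le_iff.mpr (hble m hm.1 hm.2))]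
  · rintro ⟨r, s, hr, hs, rfl⟩
    rw [map_add, map_mul, map_mul, map_pow, hr, hs]
    have hx : cyclicGen ζ (X 0) = C ζ * X 0 := by simp [cyclicGen]
    have hy : cyclicGen ζ (X 1) = C ζ⁻¹ * X 1 := by simp [cyclicGen]
    rw [hx, hy, mul_pow, ← C_pow, hinv]
    ring
end
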